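/- arXiv:2208.08310 — 2 statements merged into one kernel-verified Lean document; each statement's English description precedes it below -/
import Mathlib

section
/- (Lovász) Two digraphs on finite vertex types are isomorphic if and only if they admit the same number of incoming homomorphisms from every digraph on a finite vertex type. Precisely: for finite types α₁, α₂ with binary relations E₁ : α₁ → α₁ → Prop and E₂ : α₂ → α₂ → Prop, there exists a digraph isomorphism between (α₁,E₁) and (α₂,E₂) if and only if for every finite type γ and every relation E : γ → γ → Prop, the number of homomorphisms from (γ,E) to (α₁,E₁) equals the number of homomorphisms from (γ,E) to (α₂,E₂). -/
namespace DDS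

/-- A homomorphism of digraphs `(γ, E) → (δ, E')` is a map preserving edges. -/
def IsHom {γ : Type*} {δ : Type*} (E : γ → γ → Prop) (E' : δ → δ → Prop) (τ : γ → δ) : Prop :=
  ∀ ⦃u v⦄, E u v → E' (τ u) (τ v)

/-- Two digraphs are isomorphic if there is an edge-preserving (in both directions) bijection. -/
def Isomorphic {γ : Type*} {δ : Type*} (E : γ → γ → Prop) (E' : δ → δ → Prop) : Prop :=
  ∃ e : γ ≃ δ, ∀ u v, E u v ↔ E' (e u) (e v)

/-- The number of digraph homomorphisms from `(γ, E)` to `(δ, E')`. -/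
noncomputable def homCount (γ : Type*) (δ : Type*) (E : γ → γ → Prop) (E' : δ → δ → Prop) : ℕ :=
  Nat.card {τ : γ → δ // IsHom E E' τ}

/-- An in-tree: a root and a parent map such that the root is a fixed point and every
vertex reaches the root by iterating the parent map. -/
structure InTree (V : Type*) where
  root : V
  parent : V → V
  parent_root : parent root = root
  reaches_root : ∀ v, ∃ k, parent^[k] v = root

namespace InTree

variable {V : Type*}

/-- Edges of an in-tree are directed towards the root. -/
def Edge (T : InTree V) (v w : V) : Prop := v ≠ T.root ∧ w = T.parent v

/-- The height of a vertex: the least `k` with `parent^[k] v = root`. -/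
noncomputable def height (T : InTree V) (v : V) : ℕ := sInf {k | T.parent^[k] v = T.root}

lemma height_spec (T : InTree V) (v : V) : T.parent^[T.height v] v = T.root :=
  Nat.sInf_mem (T.reaches_root v)

@[simp] lemma height_root (T : InTree V) : T.height T.root = 0 :=
  Nat.sInf_eq_zero.mpr (Or.inl (by simp))

lemma height_eq_zero_iff (T : InTree V) {v : V} : T.height v = 0 ↔ v = T.root := by
  constructor
  · intro h
    have hs := T.height_spec v
    rw [h] at hs
    simpa using hs
  · rintro rfl
    exact T.height_root

lemma height_parent (T : InTree V) {v : V} (hv : v ≠ T.root) :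
    T.height v = T.height (T.parent v) + 1 := by
  have h1 : T.height v ≠ 0 := fun h => hv (T.height_eq_zero_iff.mp h)
  obtain ⟨m, hm⟩ := Nat.exists_eq_succ_of_ne_zero h1
  have hsp : T.parent^[T.height v] v = T.root := T.height_spec v
  rw [hm, Function.iterate_succ_apply] at hsp
  have hle : T.height (T.parent v) ≤ m := Nat.sInf_le hsp
  have hge : T.height v ≤ T.height (T.parent v) + 1 := by
    apply Nat.sInf_le
    show T.parent^[T.height (T.parent v) + 1] v = T.root
    rw [Function.iterate_succ_apply]
    exact T.height_spec (T.parent v)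
  omega

lemma height_parent_le (T : InTree V) (v : V) : T.height (T.parent v) ≤ T.height v := by
  by_cases hv : v = T.root
  · subst hv; rw [T.parent_root]
  · rw [T.height_parent hv]; omega

/-- The height of a finite in-tree: the maximum height of a vertex. -/
noncomputable def treeHeight [Fintype V] (T : InTree V) : ℕ := Finset.univ.sup T.height

section Star

variable {V₁ V₂ : Type*} (T₁ : InTree V₁) (T₂ : InTree V₂)

/-- Vertices of the `⋆` product: pairs of vertices of equal height. -/
def StarVertex := {x : V₁ × V₂ // T₁.height x.1 = T₂.height x.2}

lemma star_parent_mem (x : V₁ × V₂) (hx : T₁.height x.1 = T₂.height x.2) :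
    T₁.height (T₁.parent x.1) = T₂.height (T₂.parent x.2) := by
  by_cases h : x.1 = T₁.root
  · have h2 : x.2 = T₂.root := by
      apply T₂.height_eq_zero_iff.mp
      rw [← hx, h, T₁.height_root]
    rw [h, h2, T₁.parent_root, T₂.parent_root, T₁.height_root, T₂.height_root]
  · have h2 : x.2 ≠ T₂.root := by
      intro hc
      apply h
      apply T₁.height_eq_zero_iff.mp
      rw [hx, hc, T₂.height_root]
    have e1 := T₁.height_parent h
    have e2 := T₂.height_parent h2
    omega

/-- The parent map of the `⋆` product. -/
def starParent (x : StarVertex T₁ T₂) : StarVertex T₁ T₂ :=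
  ⟨(T₁.parent x.1.1, T₂.parent x.1.2), star_parent_mem T₁ T₂ x.1 x.2⟩

lemma starParent_iterate (k : ℕ) (x : StarVertex T₁ T₂) :
    ((starParent T₁ T₂)^[k] x).1 = (T₁.parent^[k] x.1.1, T₂.parent^[k] x.1.2) := by
  induction k generalizing x with
  | zero => simp
  | succ k ih =>
      rw [Function.iterate_succ_apply, Function.iterate_succ_apply,
        Function.iterate_succ_apply, ih]
      rfl

/-- The `⋆` product of two in-trees. -/
def star : InTree (StarVertex T₁ T₂) where
  root := ⟨(T₁.root, T₂.root), by simp⟩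
  parent := starParent T₁ T₂
  parent_root := by
    apply Subtype.ext
    show (T₁.parent T₁.root, T₂.parent T₂.root) = (T₁.root, T₂.root)
    rw [T₁.parent_root, T₂.parent_root]
  reaches_root := by
    intro x
    refine ⟨T₁.height x.1.1, Subtype.ext ?_⟩
    rw [starParent_iterate]
    have h1 : T₁.parent^[T₁.height x.1.1] x.1.1 = T₁.root := T₁.height_spec _
    have h2 : T₂.parent^[T₁.height x.1.1] x.1.2 = T₂.root := by
      rw [x.2]; exact T₂.height_spec _
    show (_, _) = (T₁.root, T₂.root)
    rw [h1, h2]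

end Star

section Cut

variable (T : InTree V) (t : ℕ)

/-- Vertices of the cut at level `t`: vertices of height at most `t`. -/
def CutVertex := {v : V // T.height v ≤ t}

/-- The parent map of the cut. -/
def cutParent (x : CutVertex T t) : CutVertex T t :=
  ⟨T.parent x.1, le_trans (T.height_parent_le x.1) x.2⟩

lemma cutParent_iterate (k : ℕ) (x : CutVertex T t) :
    ((cutParent T t)^[k] x).1 = T.parent^[k] x.1 := by
  induction k generalizing x with
  | zero => simp
  | succ k ih =>
      rw [Function.iterate_succ_apply, Function.iterate_succ_apply, ih]
      rfl

/-- The cut of an in-tree at level `t`: the sub-in-tree induced on vertices of height `≤ t`. -/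
def cut : InTree (CutVertex T t) where
  root := ⟨T.root, by simp⟩
  parent := cutParent T t
  parent_root := Subtype.ext T.parent_root
  reaches_root := fun x =>
    ⟨T.height x.1, Subtype.ext (by rw [cutParent_iterate]; exact T.height_spec x.1)⟩

end Cut

end InTree

section Unroll

variable {α : Type*} (f : α → α) (v : α)

/-- Vertices of the unroll of the functional graph of `f` from `v`. -/
def UnrollVertex := {ui : α × ℕ // f^[ui.2] ui.1 = v}

/-- The parent map of the unroll: `(u, i+1) ↦ (f u, i)`, fixing the root `(v, 0)`. -/
def unrollParent : UnrollVertex f v → UnrollVertex f v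
  | ⟨(u, 0), h⟩ => ⟨(u, 0), h⟩
  | ⟨(u, i+1), h⟩ => ⟨(f u, i), by rw [← Function.iterate_succ_apply]; exact h⟩

lemma unrollParent_iterate :
    ∀ (i : ℕ) (u : α) (h : f^[i] u = v),
      (unrollParent f v)^[i] ⟨(u, i), h⟩ = ⟨(v, 0), rfl⟩ := by
  intro i
  induction i with
  | zero =>
      intro u h
      have hu : u = v := by simpa using h
      subst hu
      rfl
  | succ i ih =>
      intro u h
      erw [Function.iterate_succ_apply]
      show (unrollParent f v)^[i] ⟨(f u, i), _⟩ = _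
      exact ih (f u) _

/-- The unroll of the functional graph of `f : α → α` from the point `v`. -/
def unroll : InTree (UnrollVertex f v) where
  root := ⟨(v, 0), rfl⟩
  parent := unrollParent f v
  parent_root := rfl
  reaches_root := fun x => ⟨x.1.2, by
    obtain ⟨⟨u, i⟩, h⟩ := x
    exact unrollParent_iterate f v i u h⟩

end Unroll

section FG

/-- The number of periodic points of `f`. -/
noncomputable def periodicCount {α : Type*} (f : α → α) : ℕ :=
  Nat.card {x : α // ∃ n, 1 ≤ n ∧ f^[n] x = x}

/-- A functional graph is connected if the equivalence relation generated by
`x ∼ f x` relates all pairs of points. -/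
def FGConnected {α : Type*} (f : α → α) : Prop :=
  ∀ x y : α, Relation.EqvGen (fun u w => f u = w) x y

/-- Isomorphism of functional graphs. -/
def FGIso {α β : Type*} (f : α → α) (g : β → β) : Prop :=
  ∃ e : α ≃ β, ∀ x, e (f x) = g (e x)

/-- The product of two functional graphs. -/
def prodMap {α γ : Type*} (f : α → α) (h : γ → γ) : α × γ → α × γ :=
  fun z => (f z.1, h z.2)

/-- `FGContains f h g` means the functional graph of `g` is (isomorphic to) a union of
connected components of the product `f × h`. -/
def FGContains {α γ β : Type*} (f : α → α) (h : γ → γ) (g : β → β) : Prop :=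
  ∃ e : β → α × γ, Function.Injective e ∧ e ∘ g = prodMap f h ∘ e ∧
    ∀ z, prodMap f h z ∈ Set.range e → z ∈ Set.range e

end FG

end DDS

open DDS DDS.InTree

section LovaszAux

universe w

open Function

/-- The number of injective digraph homomorphisms. -/
noncomputable def injCount (γ δ : Type*) (E : γ → γ → Prop) (E' : δ → δ → Prop) : ℕ :=
  Nat.card {τ : γ → δ // IsHom E E' τ ∧ Function.Injective τ}

lemma homCount_congr_source {γ γ' δ : Type*} (e : γ ≃ γ') {E : γ → γ → Prop}
    {E' : γ' → γ' → Prop} (F : δ → δ → Prop) (hE : ∀ u v, E u v ↔ E' (e u) (e v)) :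
    homCount γ δ E F = homCount γ' δ E' F := by
  apply Nat.card_congr
  refine Equiv.subtypeEquiv (Equiv.arrowCongr e (Equiv.refl δ)) (fun τ => ?_)
  constructor
  · intro hτ u v huv
    have : E (e.symm u) (e.symm v) := by
      rw [hE]; simpa using huv
    exact hτ this
  · intro hτ u v huv
    have := hτ ((hE u v).mp huv)
    simpa using this

lemma injCount_congr_source {γ γ' δ : Type*} (e : γ ≃ γ') {E : γ → γ → Prop}
    {E' : γ' → γ' → Prop} (F : δ → δ → Prop) (hE : ∀ u v, E u v ↔ E' (e u) (e v)) :
    injCount γ δ E F = injCount γ' δ E' F := by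
  apply Nat.card_congr
  refine Equiv.subtypeEquiv (Equiv.arrowCongr e (Equiv.refl δ)) (fun τ => ?_)
  constructor
  · rintro ⟨hτ, hinj⟩
    refine ⟨?_, ?_⟩
    · intro u v huv
      have : E (e.symm u) (e.symm v) := by rw [hE]; simpa using huv
      exact hτ this
    · intro u v h
      simp only [Equiv.arrowCongr_apply, Equiv.refl_apply, comp_apply] at h
      have := hinj h
      exact e.symm.injective this
  · rintro ⟨hτ, hinj⟩
    refine ⟨?_, ?_⟩
    · intro u v huv
      have := hτ ((hE u v).mp huv)
      simpa using this
    · intro u v h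
      have : (Equiv.arrowCongr e (Equiv.refl δ)) τ (e u) = (Equiv.arrowCongr e (Equiv.refl δ)) τ (e v) := by
        simpa using h
      exact e.injective (hinj this)

lemma homCount_congr_target {γ δ δ' : Type*} (e : δ ≃ δ') (E : γ → γ → Prop)
    {F : δ → δ → Prop} {F' : δ' → δ' → Prop} (hF : ∀ u v, F u v ↔ F' (e u) (e v)) :
    homCount γ δ E F = homCount γ δ' E F' := by
  apply Nat.card_congr
  refine Equiv.subtypeEquiv (Equiv.arrowCongr (Equiv.refl γ) e) (fun τ => ?_)
  constructor
  · intro hτ u v huv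
    have := hτ huv
    rw [hF] at this
    simpa using this
  · intro hτ u v huv
    have := hτ huv
    simp only [Equiv.arrowCongr_apply, Equiv.refl_symm, Equiv.refl_apply, comp_apply] at this
    rw [hF (τ u) (τ v)]
    exact this

/-- The edge relation induced on a quotient. -/
def quotEdge {γ : Type*} (s : Setoid γ) (E : γ → γ → Prop) :
    Quotient s → Quotient s → Prop :=
  fun a b => ∃ u v, Quotient.mk s u = a ∧ Quotient.mk s v = b ∧ E u v

lemma hom_equiv_sigma {γ δ : Type*} (E : γ → γ → Prop) (F : δ → δ → Prop) :
    Nonempty ((Σ s : Setoid γ,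
        {ψ : Quotient s → δ // IsHom (quotEdge s E) F ψ ∧ Injective ψ}) ≃
      {τ : γ → δ // IsHom E F τ}) := by
  refine ⟨Equiv.ofBijective
    (fun x => ⟨x.2.1 ∘ Quotient.mk x.1, ?_⟩) ⟨?_, ?_⟩⟩
  · intro u v huv
    exact x.2.2.1 ⟨u, v, rfl, rfl, huv⟩
  · rintro ⟨s, ψ, hψ, hinj⟩ ⟨s', ψ', hψ', hinj'⟩ h
    have hfun : ψ ∘ Quotient.mk s = ψ' ∘ Quotient.mk s' := congrArg Subtype.val h
    have hss : s = s' := by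
      apply Setoid.ext
      intro a b
      have key : ∀ (t : Setoid γ) (φ : Quotient t → δ), Injective φ →
          ∀ a b, (t a b ↔ φ (Quotient.mk t a) = φ (Quotient.mk t b)) := by
        intro t φ hφ a b
        constructor
        · intro hab; exact congrArg φ (Quotient.sound hab)
        · intro hab; exact @Quotient.exact _ t _ _ (hφ hab)
      rw [key s ψ hinj a b, key s' ψ' hinj' a b]
      constructor
      · intro hh
        have := congrFun hfun a
        have hb := congrFun hfun b
        simp only [comp_apply] at this hb
        rw [← this, ← hb]; exact hh
      · intro hh
        have := congrFun hfun a
        have hb := congrFun hfun b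
        simp only [comp_apply] at this hb
        rw [this, hb]; exact hh
    subst hss
    have hψψ : ψ = ψ' := by
      funext a
      induction a using Quotient.ind with
      | _ u => exact congrFun hfun u
    subst hψψ
    rfl
  · rintro ⟨τ, hτ⟩
    refine ⟨⟨Setoid.ker τ, ⟨Quotient.lift τ (fun _ _ h => h), ?_,
      Setoid.kerLift_injective τ⟩⟩, ?_⟩
    · rintro a b ⟨u, v, rfl, rfl, huv⟩
      exact hτ huv
    · apply Subtype.ext
      funext u
      rfl

instance setoidFiniteInst {γ : Type*} [Finite γ] : Finite (Setoid γ) := by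
  classical
  haveI : Fintype γ := Fintype.ofFinite γ
  exact Finite.of_injective (fun s : Setoid γ => s.r)
    (fun s t h => Setoid.ext (fun a b => iff_of_eq (congrFun (congrFun h a) b)))

lemma quotient_card_lt {γ : Type*} [Fintype γ] {s : Setoid γ} (hs : s ≠ ⊥) :
    Nat.card (Quotient s) < Nat.card γ := by
  classical
  haveI : Fintype (Quotient s) := Fintype.ofFinite _
  have hsurj : Surjective (Quotient.mk s) := Quotient.mk_surjective
  have hle : Nat.card (Quotient s) ≤ Nat.card γ := Nat.card_le_card_of_surjective _ hsurj
  rcases lt_or_eq_of_le hle with h | h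
  · exact h
  · exfalso
    apply hs
    have hbij : Bijective (Quotient.mk s) := by
      rw [Fintype.bijective_iff_surjective_and_card]
      refine ⟨hsurj, ?_⟩
      rw [← Nat.card_eq_fintype_card, ← Nat.card_eq_fintype_card, h]
    apply le_bot_iff.mp
    intro a b hab
    have h2 : Quotient.mk s a = Quotient.mk s b := Quot.sound hab
    have h3 : a = b := hbij.1 h2
    exact (iff_of_eq (congrFun (congrFun Setoid.bot_def a) b)).mpr h3

lemma injCount_bot {γ δ : Type*} (E : γ → γ → Prop) (F : δ → δ → Prop) :
    injCount (Quotient (⊥ : Setoid γ)) δ (quotEdge ⊥ E) F = injCount γ δ E F := by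
  have hinj : Injective (Quotient.mk (⊥ : Setoid γ)) := by
    intro a b h
    exact @Quotient.exact _ (⊥ : Setoid γ) _ _ h
  have hbij : Bijective (Quotient.mk (⊥ : Setoid γ)) :=
    ⟨hinj, Quotient.mk_surjective⟩
  symm
  refine injCount_congr_source (Equiv.ofBijective _ hbij) F (fun u v => ?_)
  constructor
  · intro h
    exact ⟨u, v, rfl, rfl, h⟩
  · rintro ⟨u', v', hu, hv, h⟩
    have hu' : u' = u := hinj hu
    have hv' : v' = v := hinj hv
    rw [← hu', ← hv']; exact h

lemma homCount_eq_sum {γ δ : Type*} [Fintype γ] [Fintype δ] (E : γ → γ → Prop)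
    (F : δ → δ → Prop) :
    letI : Fintype (Setoid γ) := Fintype.ofFinite _
    homCount γ δ E F = ∑ s : Setoid γ,
      Nat.card {ψ : Quotient s → δ // IsHom (quotEdge s E) F ψ ∧ Injective ψ} := by
  classical
  letI : Fintype (Setoid γ) := Fintype.ofFinite _
  letI : ∀ s : Setoid γ,
      Fintype {ψ : Quotient s → δ // IsHom (quotEdge s E) F ψ ∧ Injective ψ} :=
    fun s => Fintype.ofFinite _
  obtain ⟨e⟩ := hom_equiv_sigma E F
  rw [homCount, ← Nat.card_congr e, Nat.card_eq_fintype_card, Fintype.card_sigma]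
  exact Finset.sum_congr rfl (fun s _ => (Nat.card_eq_fintype_card).symm)

lemma injCount_eq_of_homCount_eq {α₁ α₂ : Type*} [Fintype α₁] [Fintype α₂]
    {E₁ : α₁ → α₁ → Prop} {E₂ : α₂ → α₂ → Prop}
    (H : ∀ (n : ℕ) (F : Fin n → Fin n → Prop),
      homCount (Fin n) α₁ F E₁ = homCount (Fin n) α₂ F E₂) :
    ∀ (n : ℕ) (γ : Type*) [Fintype γ] (E : γ → γ → Prop), Nat.card γ = n →
      injCount γ α₁ E E₁ = injCount γ α₂ E E₂ := by
  intro n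
  induction n using Nat.strong_induction_on with
  | _ n ih =>
    intro γ _ E hcard
    classical
    letI : Fintype (Setoid γ) := Fintype.ofFinite _
    -- transfer the hypothesis to γ
    have hfin : Nat.card γ = Fintype.card γ := Nat.card_eq_fintype_card
    obtain ⟨eF⟩ : Nonempty (γ ≃ Fin (Fintype.card γ)) := ⟨Fintype.equivFin γ⟩
    have Hγ : homCount γ α₁ E E₁ = homCount γ α₂ E E₂ := by
      set E' : Fin (Fintype.card γ) → Fin (Fintype.card γ) → Prop :=
        fun a b => E (eF.symm a) (eF.symm b) with hE'
      have hiff : ∀ u v, E u v ↔ E' (eF u) (eF v) := by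
        intro u v; simp [hE']
      rw [homCount_congr_source eF E₁ hiff, homCount_congr_source eF E₂ hiff]
      exact H _ E'
    have hsum₁ := homCount_eq_sum E E₁
    have hsum₂ := homCount_eq_sum E E₂
    rw [hsum₁, hsum₂] at Hγ
    have hbot : (⊥ : Setoid γ) ∈ (Finset.univ : Finset (Setoid γ)) := Finset.mem_univ _
    rw [← Finset.add_sum_erase _ _ hbot, ← Finset.add_sum_erase _ _ hbot] at Hγ
    have hrest : ∀ s ∈ Finset.univ.erase (⊥ : Setoid γ),
        Nat.card {ψ : Quotient s → α₁ // IsHom (quotEdge s E) E₁ ψ ∧ Injective ψ} =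
        Nat.card {ψ : Quotient s → α₂ // IsHom (quotEdge s E) E₂ ψ ∧ Injective ψ} := by
      intro s hs
      have hne : s ≠ ⊥ := (Finset.mem_erase.mp hs).1
      have hlt : Nat.card (Quotient s) < n := hcard ▸ quotient_card_lt hne
      haveI : Fintype (Quotient s) := Fintype.ofFinite _
      exact ih _ hlt (Quotient s) (quotEdge s E) rfl
    have hsum_eq : ∑ s ∈ Finset.univ.erase (⊥ : Setoid γ),
        Nat.card {ψ : Quotient s → α₁ // IsHom (quotEdge s E) E₁ ψ ∧ Injective ψ} =
        ∑ s ∈ Finset.univ.erase (⊥ : Setoid γ),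
        Nat.card {ψ : Quotient s → α₂ // IsHom (quotEdge s E) E₂ ψ ∧ Injective ψ} :=
      Finset.sum_congr rfl hrest
    have hbot_eq : Nat.card {ψ : Quotient (⊥ : Setoid γ) → α₁ //
          IsHom (quotEdge ⊥ E) E₁ ψ ∧ Injective ψ} =
        Nat.card {ψ : Quotient (⊥ : Setoid γ) → α₂ //
          IsHom (quotEdge ⊥ E) E₂ ψ ∧ Injective ψ} := by
      omega
    rw [← injCount_bot E E₁, ← injCount_bot E E₂]
    exact hbot_eq

lemma homCount_ulift {n : ℕ} (F : Fin n → Fin n → Prop) (δ : Type*) (G : δ → δ → Prop) :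
    homCount (ULift.{w} (Fin n)) δ (fun a b => F a.down b.down) G =
      homCount (Fin n) δ F G :=
  (homCount_congr_source (E' := fun a b : ULift.{w} (Fin n) => F a.down b.down)
    Equiv.ulift.symm G (fun _ _ => Iff.rfl)).symm

lemma hom_bij_reflect {α : Type*} [Fintype α] {E : α → α → Prop} {σ : α → α}
    (hσ : IsHom E E σ) (hinj : Injective σ) : ∀ u v, E (σ u) (σ v) → E u v := by
  intro u v h
  set S := {p : α × α // E p.1 p.2}
  let m : S → S := fun p => ⟨(σ p.1.1, σ p.1.2), hσ p.2⟩
  have hminj : Injective m := by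
    rintro ⟨⟨a, b⟩, hab⟩ ⟨⟨c, d⟩, hcd⟩ hm
    have h1 : σ a = σ c := congrArg (fun q : S => q.1.1) hm
    have h2 : σ b = σ d := congrArg (fun q : S => q.1.2) hm
    have := hinj h1
    have := hinj h2
    apply Subtype.ext
    simp_all
  have hmsurj : Surjective m := Finite.surjective_of_injective hminj
  obtain ⟨⟨⟨a, b⟩, hab⟩, hm⟩ := hmsurj ⟨(σ u, σ v), h⟩
  have h1 : σ a = σ u := congrArg (fun q : S => q.1.1) hm
  have h2 : σ b = σ v := congrArg (fun q : S => q.1.2) hm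
  have ha := hinj h1
  have hb := hinj h2
  rwa [ha, hb] at hab

end LovaszAux

/-- **Lovász.** Two digraphs on finite vertex types are isomorphic iff they admit the same
number of incoming homomorphisms from every digraph on a finite vertex type. -/
theorem lovasz_digraph {α₁ α₂ : Type*} [Fintype α₁] [Fintype α₂]
    (E₁ : α₁ → α₁ → Prop) (E₂ : α₂ → α₂ → Prop) :
    Isomorphic E₁ E₂ ↔
      ∀ (γ : Type*) [Fintype γ] (E : γ → γ → Prop),
        homCount γ α₁ E E₁ = homCount γ α₂ E E₂ := by
  constructor
  · rintro ⟨e, he⟩ γ _ E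
    exact homCount_congr_target e E (fun u v => he u v)
  · intro H
    have H' : ∀ (n : ℕ) (F : Fin n → Fin n → Prop),
        homCount (Fin n) α₁ F E₁ = homCount (Fin n) α₂ F E₂ := by
      intro n F
      exact (homCount_ulift F α₁ E₁).symm.trans
        ((H (ULift (Fin n)) (fun a b => F a.down b.down)).trans
          (homCount_ulift F α₂ E₂))
    have h21 : injCount α₂ α₁ E₂ E₁ = injCount α₂ α₂ E₂ E₂ :=
      injCount_eq_of_homCount_eq H' _ α₂ E₂ rfl
    have h12 : injCount α₁ α₁ E₁ E₁ = injCount α₁ α₂ E₁ E₂ :=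
      injCount_eq_of_homCount_eq H' _ α₁ E₁ rfl
    have pos2 : 0 < injCount α₂ α₂ E₂ E₂ := by
      have : Nonempty {τ : α₂ → α₂ // IsHom E₂ E₂ τ ∧ Function.Injective τ} :=
        ⟨⟨id, fun _ _ h => h, fun _ _ h => h⟩⟩
      exact Nat.card_pos
    have pos1 : 0 < injCount α₁ α₁ E₁ E₁ := by
      have : Nonempty {τ : α₁ → α₁ // IsHom E₁ E₁ τ ∧ Function.Injective τ} :=
        ⟨⟨id, fun _ _ h => h, fun _ _ h => h⟩⟩
      exact Nat.card_pos
    have hg' : 0 < injCount α₂ α₁ E₂ E₁ := h21 ▸ pos2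
    have hf' : 0 < injCount α₁ α₂ E₁ E₂ := h12 ▸ pos1
    obtain ⟨⟨g, hg, hginj⟩⟩ := (Nat.card_pos_iff.mp hg').1
    obtain ⟨⟨f, hf, hfinj⟩⟩ := (Nat.card_pos_iff.mp hf').1
    have hcard : Fintype.card α₁ = Fintype.card α₂ :=
      le_antisymm (Fintype.card_le_of_injective f hfinj)
        (Fintype.card_le_of_injective g hginj)
    have hbij : Function.Bijective f :=
      (Fintype.bijective_iff_injective_and_card f).mpr ⟨hfinj, hcard⟩
    have hσ : IsHom E₁ E₁ (g ∘ f) := fun u v h => hg (hf h)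
    have hσinj : Function.Injective (g ∘ f) := hginj.comp hfinj
    have reflect := hom_bij_reflect hσ hσinj
    refine ⟨Equiv.ofBijective f hbij, fun u v => ⟨fun h => hf h, fun h => ?_⟩⟩
    exact reflect u v (hg h)
end

section
/- Let f : α → α and g : β → β be connected FGs on finite nonempty types with cycle lengths c_A and c_B, and let p ≥ 1 be such that lcm(c_A, p) = c_B. Then for every m : ℕ and every family of FGs hᵢ : γᵢ → γᵢ (i = 1, …, m) on finite nonempty types such that each hᵢ is connected, each hᵢ has exactly p periodic points, each product FG f × hᵢ contains g (i.e., there is an injection e : β → α × γᵢ with e ∘ g = (f × hᵢ) ∘ e whose range is closed under preimages of f × hᵢ), and the hᵢ are pairwise non-isomorphic as FGs, one has m ≤ c_A. -/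
open DDS DDS.InTree

namespace FGP
open Function

variable {T X Y Z β : Type*}

/-- pointed equivariant maps -/
def Homs (Tf : T → T) (Fx : X → X) (t₀ : T) (x₀ : X) : Type _ :=
  {τ : T → X // (∀ t, τ (Tf t) = Fx (τ t)) ∧ τ t₀ = x₀}

noncomputable def N (Tf : T → T) (Fx : X → X) (t₀ : T) (x₀ : X) : ℕ :=
  Nat.card (Homs Tf Fx t₀ x₀)

def InjHoms (Tf : T → T) (Fx : X → X) (t₀ : T) (x₀ : X) : Type _ :=
  {τ : T → X // ((∀ t, τ (Tf t) = Fx (τ t)) ∧ τ t₀ = x₀) ∧ Function.Injective τ}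

noncomputable def I (Tf : T → T) (Fx : X → X) (t₀ : T) (x₀ : X) : ℕ :=
  Nat.card (InjHoms Tf Fx t₀ x₀)

lemma hom_iterate {Tf : T → T} {Fx : X → X} {τ : T → X}
    (h : ∀ t, τ (Tf t) = Fx (τ t)) (n : ℕ) (t : T) : τ (Tf^[n] t) = Fx^[n] (τ t) := by
  induction n generalizing t with
  | zero => rfl
  | succ n ih =>
      rw [Function.iterate_succ_apply, Function.iterate_succ_apply, ih, h]

lemma prodMap_iterate {f : X → X} {h : Y → Y} (n : ℕ) (z : X × Y) :
    (prodMap f h)^[n] z = (f^[n] z.1, h^[n] z.2) := by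
  induction n generalizing z with
  | zero => rfl
  | succ n ih => rw [Function.iterate_succ_apply, ih]; rfl

lemma per_image {Tf : T → T} {Fx : X → X} {τ : T → X}
    (h : ∀ t, τ (Tf t) = Fx (τ t)) {t : T} (ht : t ∈ periodicPts Tf) :
    τ t ∈ periodicPts Fx := by
  obtain ⟨n, hn, hfix⟩ := ht
  exact ⟨n, hn, show Fx^[n] (τ t) = τ t by rw [← hom_iterate h, hfix]⟩

/-- image of the zigzag relation under a hom -/
lemma eqvGen_map {Tf : T → T} {Fx : X → X} {τ : T → X}
    (h : ∀ t, τ (Tf t) = Fx (τ t)) {t t' : T}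
    (he : Relation.EqvGen (fun a b => Tf a = b) t t') :
    Relation.EqvGen (fun a b => Fx a = b) (τ t) (τ t') := by
  induction he with
  | rel a b hab => exact Relation.EqvGen.rel _ _ (by rw [← hab, h])
  | refl a => exact Relation.EqvGen.refl _
  | symm a b _ ih => exact ih.symm _ _
  | trans a b c _ _ ih1 ih2 => exact ih1.trans _ _ _ ih2

lemma eqvGen_mem_range {F : Z → Z} {e : β → Z}
    (hF : ∀ z ∈ Set.range e, F z ∈ Set.range e)
    (hpre : ∀ z, F z ∈ Set.range e → z ∈ Set.range e) {z z' : Z}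
    (he : Relation.EqvGen (fun a b => F a = b) z z') :
    z ∈ Set.range e ↔ z' ∈ Set.range e := by
  induction he with
  | rel a b hab => subst hab; exact ⟨fun h => hF a h, fun h => hpre a h⟩
  | refl a => exact Iff.rfl
  | symm a b _ ih => exact ih.symm
  | trans a b c _ _ ih1 ih2 => exact ih1.trans ih2

lemma eqvGen_iterate {f : Z → Z} {u v : Z}
    (he : Relation.EqvGen (fun a b => f a = b) u v) :
    ∃ k l, f^[k] u = f^[l] v := by
  induction he with
  | rel a b hab => exact ⟨1, 0, hab⟩
  | refl a => exact ⟨0, 0, rfl⟩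
  | symm a b _ ih => obtain ⟨k, l, h⟩ := ih; exact ⟨l, k, h.symm⟩
  | trans a b c _ _ ih1 ih2 =>
      obtain ⟨k, l, h1⟩ := ih1
      obtain ⟨k', l', h2⟩ := ih2
      refine ⟨k' + k, l + l', ?_⟩
      rw [Function.iterate_add_apply, Function.iterate_add_apply, h1,
        ← Function.iterate_add_apply, Nat.add_comm,
        Function.iterate_add_apply, h2]

section Cycle

variable {α : Type*} {f : α → α}

lemma exists_periodic_iterate [Finite α] (x : α) : ∃ k, f^[k] x ∈ periodicPts f := by
  obtain ⟨i, j, hne, hij⟩ := Finite.exists_ne_map_eq_of_infinite (fun n : ℕ => f^[n] x)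
  rcases Nat.lt_or_ge i j with hlt | hge
  · refine ⟨i, j - i, by omega, ?_⟩
    show f^[j - i] (f^[i] x) = f^[i] x
    rw [← Function.iterate_add_apply]
    have : j - i + i = j := by omega
    rw [this, hij]
  · have hlt : j < i := by omega
    refine ⟨j, i - j, by omega, ?_⟩
    show f^[i - j] (f^[j] x) = f^[j] x
    rw [← Function.iterate_add_apply]
    have : i - j + j = i := by omega
    rw [this, ← hij]

lemma iterate_mem_periodicPts {a : α} (ha : a ∈ periodicPts f) (k : ℕ) :
    f^[k] a ∈ periodicPts f := by
  obtain ⟨n, hn, hfix⟩ := ha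
  refine ⟨n, hn, ?_⟩
  show f^[n] (f^[k] a) = f^[k] a
  rw [← Function.iterate_add_apply, Nat.add_comm, Function.iterate_add_apply]
  exact congrArg _ hfix

lemma iterate_fixed_of_dvd {a : α} {c n : ℕ} (hc : f^[c] a = a) (hdvd : c ∣ n) :
    f^[n] a = a := by
  obtain ⟨q, rfl⟩ := hdvd
  rw [Function.iterate_mul]
  exact Function.IsFixedPt.iterate hc q

lemma iterate_mod_cycle {a : α} {c : ℕ} (hc : f^[c] a = a) (n : ℕ) :
    f^[n % c] a = f^[n] a := by
  conv_rhs => rw [← Nat.mod_add_div n c]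
  rw [Function.iterate_add_apply]
  congr 1
  exact (iterate_fixed_of_dvd hc ⟨n / c, rfl⟩).symm

lemma iterate_eq_of_natCast_eq {a : α} {c : ℕ} (hc : f^[c] a = a) {m n : ℕ}
    (h : (m : ZMod c) = n) : f^[m] a = f^[n] a := by
  rcases Nat.eq_zero_or_pos c with rfl | hcpos
  · have : m = n := by exact_mod_cast h
    rw [this]
  · have : m % c = n % c := by
      haveI : NeZero c := ⟨by omega⟩
      rwa [ZMod.natCast_eq_natCast_iff] at h
    rw [← iterate_mod_cycle hc m, ← iterate_mod_cycle hc n, this]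

lemma orbit_of_connected (hf : FGConnected f) {a b : α}
    (hb : b ∈ periodicPts f) : ∃ k, f^[k] a = b := by
  obtain ⟨k, l, hkl⟩ := eqvGen_iterate (hf a b)
  have hmp : 0 < minimalPeriod f b := by
    obtain ⟨n, hn, hfix⟩ := hb
    exact hfix.minimalPeriod_pos hn
  set mp := minimalPeriod f b with hmpdef
  have hcyc : f^[mp] b = b := Function.iterate_minimalPeriod
  have hN : f^[(l + 1) * mp] b = b := iterate_fixed_of_dvd hcyc ⟨l + 1, Nat.mul_comm _ _⟩
  have hge : l ≤ (l + 1) * mp := by nlinarith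
  refine ⟨(l + 1) * mp - l + k, ?_⟩
  rw [Function.iterate_add_apply, hkl, ← Function.iterate_add_apply]
  have : (l + 1) * mp - l + l = (l + 1) * mp := by omega
  rw [this, hN]

/-- For a connected FG on a finite type, the number of periodic points equals the
minimal period of any periodic point. -/
lemma periodicCount_eq_minimalPeriod [Finite α] (hf : FGConnected f) {a : α}
    (ha : a ∈ periodicPts f) : periodicCount f = minimalPeriod f a := by
  have hmp : 0 < minimalPeriod f a := by
    obtain ⟨n, hn, hfix⟩ := ha
    exact hfix.minimalPeriod_pos hn
  have e1 : {x : α // ∃ n, 1 ≤ n ∧ f^[n] x = x} ≃ {x : α // x ∈ periodicPts f} :=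
    Equiv.subtypeEquivRight (fun x => by
      simp [Function.mem_periodicPts, Function.IsPeriodicPt, Function.IsFixedPt, Nat.lt_iff_add_one_le])
  have e2 : Fin (minimalPeriod f a) ≃ {x : α // x ∈ periodicPts f} := by
    refine Equiv.ofBijective (fun k => ⟨f^[(k : ℕ)] a, iterate_mem_periodicPts ha k⟩) ⟨?_, ?_⟩
    · intro k k' hkk'
      have := Function.iterate_injOn_Iio_minimalPeriod (f := f) (x := a) k.isLt k'.isLt
        (by simpa using congrArg Subtype.val hkk')
      exact Fin.ext this
    · rintro ⟨b, hb⟩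
      obtain ⟨k, hk⟩ := orbit_of_connected hf hb
      refine ⟨⟨k % minimalPeriod f a, Nat.mod_lt _ hmp⟩, ?_⟩
      simp only [Subtype.mk.injEq]
      rw [Function.iterate_mod_minimalPeriod_eq, hk]
  show Nat.card _ = _
  rw [Nat.card_congr (e1.trans e2.symm), Nat.card_eq_fintype_card, Fintype.card_fin]

lemma periodicCount_pos [Finite α] [Nonempty α] (_hf : FGConnected f) :
    0 < periodicCount f := by
  obtain ⟨x⟩ := ‹Nonempty α›
  obtain ⟨k, hk⟩ := exists_periodic_iterate (f := f) x
  rw [periodicCount_eq_minimalPeriod _hf hk]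
  obtain ⟨n, hn, hfix⟩ := hk
  exact hfix.minimalPeriod_pos hn

lemma iterate_periodicCount [Finite α] (hf : FGConnected f) {a : α}
    (ha : a ∈ periodicPts f) : f^[periodicCount f] a = a := by
  rw [periodicCount_eq_minimalPeriod hf ha]
  exact Function.iterate_minimalPeriod

end Cycle

section Cyc

/-- the pure cycle on `ZMod c` -/
def cyc (c : ℕ) : ZMod c → ZMod c := fun s => s + 1

lemma cyc_iterate {c : ℕ} (n : ℕ) (x : ZMod c) : (cyc c)^[n] x = x + n := by
  induction n with
  | zero => simp
  | succ n ih => rw [Function.iterate_succ_apply', ih, cyc]; push_cast; ring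

lemma cyc_hom_unique {Tf : T → T} (hT : FGConnected Tf) {c : ℕ}
    {ψ ψ' : T → ZMod c} (h : ∀ t, ψ (Tf t) = ψ t + 1) (h' : ∀ t, ψ' (Tf t) = ψ' t + 1)
    {t₀ : T} (hbase : ψ t₀ = ψ' t₀) : ∀ t, ψ t = ψ' t := by
  intro t
  have key : ∀ u v : T, Relation.EqvGen (fun a b => Tf a = b) u v →
      (ψ u = ψ' u ↔ ψ v = ψ' v) := by
    intro u v huv
    induction huv with
    | rel a b hab =>
        subst hab
        rw [h, h']
        exact ⟨fun hh => by rw [hh], fun hh => by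
          exact add_right_cancel hh⟩
    | refl a => exact Iff.rfl
    | symm a b _ ih => exact ih.symm
    | trans a b c _ _ ih1 ih2 => exact ih1.trans ih2
  exact (key t₀ t (hT t₀ t)).mp hbase

lemma homs_nonempty_of_cyc {α : Type*} {Tf : T → T} {t₀ : T} {f : α → α} {a : α} {c : ℕ}
    [NeZero c] (hc : f^[c] a = a) (ψ : T → ZMod c) (hψ : ∀ t, ψ (Tf t) = ψ t + 1) :
    Nonempty (Homs Tf f t₀ a) := by
  refine ⟨⟨fun t => f^[(ψ t - ψ t₀).val] a, ?_, ?_⟩⟩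
  · intro t
    show f^[(ψ (Tf t) - ψ t₀).val] a = f (f^[(ψ t - ψ t₀).val] a)
    rw [← Function.iterate_succ_apply' f ((ψ t - ψ t₀).val) a]
    apply iterate_eq_of_natCast_eq hc
    rw [ZMod.natCast_rightInverse _]
    push_cast
    rw [ZMod.natCast_rightInverse _, hψ t]
    ring
  · show f^[(ψ t₀ - ψ t₀).val] a = a
    rw [sub_self]
    simp


end Cyc

section Count

variable {α γ δ : Type*} {f : α → α} {h : γ → γ} {Tf : T → T} {t₀ : T}

/-- pointed homs into a product split as pairs -/
def homsProdEquiv (u : α) (y : γ) :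
    Homs Tf (prodMap f h) t₀ (u, y) ≃ Homs Tf f t₀ u × Homs Tf h t₀ y where
  toFun τ :=
    (⟨fun t => (τ.1 t).1, fun t => congrArg Prod.fst (τ.2.1 t), congrArg Prod.fst τ.2.2⟩,
     ⟨fun t => (τ.1 t).2, fun t => congrArg Prod.snd (τ.2.1 t), congrArg Prod.snd τ.2.2⟩)
  invFun p :=
    ⟨fun t => (p.1.1 t, p.2.1 t), fun t => Prod.ext (p.1.2.1 t) (p.2.2.1 t),
      Prod.ext p.1.2.2 p.2.2.2⟩
  left_inv τ := Subtype.ext rfl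
  right_inv p := rfl

/-- the connected component (equivalence class) of a point, as a functional graph -/
def Cls (F : Z → Z) (z : Z) : Type _ :=
  {z' : Z // Relation.EqvGen (fun a b => F a = b) z' z}

def clsMap (F : Z → Z) (z : Z) : Cls F z → Cls F z := fun x =>
  ⟨F x.1, by
    refine Relation.EqvGen.trans _ _ _ ?_ x.2
    refine Relation.EqvGen.symm _ _ ?_
    exact Relation.EqvGen.rel (r := fun a b => F a = b) x.1 (F x.1) rfl⟩

def clsBase (F : Z → Z) (z : Z) : Cls F z := ⟨z, Relation.EqvGen.refl z⟩

lemma clsMap_iterate (F : Z → Z) (z : Z) (n : ℕ) (x : Cls F z) :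
    ((clsMap F z)^[n] x).1 = F^[n] x.1 := by
  induction n generalizing x with
  | zero => rfl
  | succ n ih => rw [Function.iterate_succ_apply, Function.iterate_succ_apply, ih]; rfl

lemma cls_connected (F : Z → Z) (z : Z) : FGConnected (clsMap F z) := by
  have key : ∀ u v : Z, Relation.EqvGen (fun a b => F a = b) u v →
      ∀ (hu : Relation.EqvGen (fun a b => F a = b) u z)
        (hv : Relation.EqvGen (fun a b => F a = b) v z),
      Relation.EqvGen (fun a b => clsMap F z a = b) ⟨u, hu⟩ ⟨v, hv⟩ := by
    intro u v huv
    induction huv with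
    | rel a b hab =>
        intro hu hv
        exact Relation.EqvGen.rel _ _ (Subtype.ext hab)
    | refl a =>
        intro hu hv
        have : (⟨a, hu⟩ : Cls F z) = ⟨a, hv⟩ := Subtype.ext rfl
        rw [this]
        exact Relation.EqvGen.refl _
    | symm a b hab ih =>
        intro hu hv
        exact (ih hv hu).symm _ _
    | trans a b c hab hbc ih1 ih2 =>
        intro hu hv
        have hb : Relation.EqvGen (fun a b => F a = b) b z :=
          (hab.symm _ _).trans _ _ _ hu
        exact (ih1 hu hb).trans _ _ _ (ih2 hb hv)
  intro x y
  have := key x.1 y.1 ((x.2).trans _ _ _ ((y.2).symm _ _)) x.2 y.2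
  exact this

/-- pointed homs from a connected source into a component agree with those into
the ambient graph -/
noncomputable def homsClsEquiv {F : Z → Z} (hT : FGConnected Tf) (z : Z) :
    Homs Tf (clsMap F z) t₀ (clsBase F z) ≃ Homs Tf F t₀ z := by
  apply Equiv.ofBijective
    (fun τ => ⟨fun t => (τ.1 t).1, fun t => congrArg Subtype.val (τ.2.1 t),
      congrArg Subtype.val τ.2.2⟩)
  constructor
  · intro τ τ' hττ'
    apply Subtype.ext
    funext t
    apply Subtype.ext
    exact congrFun (congrArg Subtype.val hττ') t
  · intro σ
    have hmem : ∀ t, Relation.EqvGen (fun a b => F a = b) (σ.1 t) z := by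
      intro t
      have := eqvGen_map σ.2.1 (hT t t₀)
      rwa [σ.2.2] at this
    refine ⟨⟨fun t => ⟨σ.1 t, hmem t⟩, fun t => Subtype.ext (σ.2.1 t),
      Subtype.ext σ.2.2⟩, ?_⟩
    exact Subtype.ext rfl

/-- pointed homs into the product, based in the embedded copy of `g`, agree with pointed
homs into `g` -/
noncomputable def homsContainsEquiv {β : Type*} {g : β → β}
    {e : β → α × γ} (hinj : Function.Injective e)
    (hcomm : ∀ b, e (g b) = prodMap f h (e b))
    (hpre : ∀ z, prodMap f h z ∈ Set.range e → z ∈ Set.range e)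
    (hT : FGConnected Tf) (b : β) :
    Homs Tf g t₀ b ≃ Homs Tf (prodMap f h) t₀ (e b) := by
  apply Equiv.ofBijective (fun τ => ⟨fun t => e (τ.1 t),
    fun t => by show e (τ.1 (Tf t)) = prodMap f h (e (τ.1 t)); rw [τ.2.1 t, hcomm],
    by show e (τ.1 t₀) = e b; rw [τ.2.2]⟩)
  constructor
  · intro τ τ' hττ'
    apply Subtype.ext
    funext t
    exact hinj (congrFun (congrArg Subtype.val hττ') t)
  · intro σ
    have hmem : ∀ t, σ.1 t ∈ Set.range e := by
      intro t
      have hzig := eqvGen_map σ.2.1 (hT t t₀)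
      rw [σ.2.2] at hzig
      refine (eqvGen_mem_range ?_ hpre hzig).mpr ⟨b, rfl⟩
      rintro z ⟨b', rfl⟩
      exact ⟨g b', hcomm b'⟩
    choose τ hτ using hmem
    refine ⟨⟨τ, ?_, ?_⟩, ?_⟩
    · intro t
      apply hinj
      rw [hτ (Tf t), σ.2.1 t, hcomm, hτ t]
    · apply hinj
      rw [hτ t₀, σ.2.2]
    · apply Subtype.ext
      funext t
      exact hτ t
  
end Count

section Lovasz

variable {Tf : T → T} {t₀ : T}

instance finiteSetoid [Finite T] : Finite (Setoid T) :=
  Finite.of_injective (fun S => S.r)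
    (fun S S' h => Setoid.ext (fun {a b} => by rw [show S.r = S'.r from h]))

/-- a congruence: a setoid compatible with the dynamics -/
def CompatSetoid (Tf : T → T) : Type _ :=
  {S : Setoid T // ∀ a b, S.r a b → S.r (Tf a) (Tf b)}

instance [Finite T] : Finite (CompatSetoid Tf) := by
  unfold CompatSetoid; infer_instance

/-- the quotient dynamics -/
def qmap (Tf : T → T) (S : CompatSetoid Tf) : Quotient S.1 → Quotient S.1 :=
  Quotient.lift (fun t => Quotient.mk S.1 (Tf t)) (fun a b hab => Quotient.sound (S.2 a b hab))

lemma qmap_mk (S : CompatSetoid Tf) (t : T) :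
    qmap Tf S (Quotient.mk S.1 t) = Quotient.mk S.1 (Tf t) := rfl

lemma qmap_connected (hT : FGConnected Tf) (S : CompatSetoid Tf) :
    FGConnected (qmap Tf S) := by
  intro x y
  obtain ⟨a, rfl⟩ := Quotient.exists_rep x
  obtain ⟨b, rfl⟩ := Quotient.exists_rep y
  exact eqvGen_map (τ := Quotient.mk S.1) (fun t => rfl) (hT a b)

/-- the trivial congruence -/
def idC (Tf : T → T) : CompatSetoid Tf :=
  ⟨⟨fun a b => a = b, ⟨fun _ => rfl, fun h => h.symm, fun h1 h2 => h1.trans h2⟩⟩,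
   fun a b hab => by cases hab; rfl⟩

/-- kernel of a pointed hom, as a congruence -/
def kerC {X : Type*} {Fx : X → X} {x₀ : X} (τ : Homs Tf Fx t₀ x₀) : CompatSetoid Tf :=
  ⟨⟨fun a b => τ.1 a = τ.1 b, ⟨fun _ => rfl, fun h => h.symm, fun h1 h2 => h1.trans h2⟩⟩,
   fun a b hab => by show τ.1 (Tf a) = τ.1 (Tf b); rw [τ.2.1 a, τ.2.1 b, hab]⟩

/-- fibers of the kernel map are the injective pointed homs from the quotient -/
noncomputable def kerFiberEquiv {X : Type*} (Fx : X → X) (x₀ : X) (S : CompatSetoid Tf) :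
    {τ : Homs Tf Fx t₀ x₀ // kerC τ = S} ≃ InjHoms (qmap Tf S) Fx (Quotient.mk S.1 t₀) x₀ := by
  apply Equiv.ofBijective (fun τ => by
    have hker : ∀ a b, S.1.r a b ↔ τ.1.1 a = τ.1.1 b := by
      intro a b
      have h2 := congrArg (fun C : CompatSetoid Tf => C.1.r a b) τ.2
      exact Iff.of_eq h2.symm
    refine ⟨Quotient.lift τ.1.1 (fun a b hab => (hker a b).mp hab), ⟨?_, ?_⟩, ?_⟩
    · intro q
      obtain ⟨a, rfl⟩ := Quotient.exists_rep q
      exact τ.1.2.1 a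
    · exact τ.1.2.2
    · intro q q' hqq'
      obtain ⟨a, rfl⟩ := Quotient.exists_rep q
      obtain ⟨b, rfl⟩ := Quotient.exists_rep q'
      exact Quotient.sound ((hker a b).mpr hqq'))
  constructor
  · intro τ τ' hττ'
    apply Subtype.ext
    apply Subtype.ext
    funext t
    exact congrArg
      (fun σ : InjHoms (qmap Tf S) Fx (Quotient.mk S.1 t₀) x₀ => σ.1 (Quotient.mk S.1 t)) hττ'
  · intro σ
    refine ⟨⟨⟨fun t => σ.1 (Quotient.mk S.1 t), fun t => ?_, σ.2.1.2⟩, ?_⟩, ?_⟩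
    · show σ.1 (Quotient.mk S.1 (Tf t)) = Fx (σ.1 (Quotient.mk S.1 t))
      exact σ.2.1.1 (Quotient.mk S.1 t)
    · apply Subtype.ext
      apply Setoid.ext
      intro a b
      show σ.1 (Quotient.mk S.1 a) = σ.1 (Quotient.mk S.1 b) ↔ S.1.r a b
      constructor
      · intro hab
        exact Quotient.exact (σ.2.2 hab)
      · intro hab
        exact congrArg σ.1 (Quotient.sound hab)
    · apply Subtype.ext
      funext q
      obtain ⟨a, rfl⟩ := Quotient.exists_rep q
      rfl

lemma nat_card_sigma {ι : Type*} [Fintype ι] (β : ι → Type*) [∀ i, Finite (β i)] :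
    Nat.card (Σ i, β i) = ∑ i, Nat.card (β i) := by
  haveI := fun i => Fintype.ofFinite (β i)
  simp only [Nat.card_eq_fintype_card, Fintype.card_sigma]

/-- transport of injective pointed homs along an isomorphism of sources -/
noncomputable def injHomsCongrSource {T' X : Type*} {Tf' : T' → T'} {t₀' : T'}
    {Fx : X → X} {x₀ : X} (ρ : T' ≃ T) (hρ : ∀ t, ρ (Tf' t) = Tf (ρ t)) (ht : ρ t₀' = t₀) :
    InjHoms Tf Fx t₀ x₀ ≃ InjHoms Tf' Fx t₀' x₀ := by
  apply Equiv.ofBijective (fun τ =>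
    ⟨fun t => τ.1 (ρ t),
     ⟨fun t => by show τ.1 (ρ (Tf' t)) = Fx (τ.1 (ρ t)); rw [hρ t]; exact τ.2.1.1 (ρ t),
      by show τ.1 (ρ t₀') = x₀; rw [ht]; exact τ.2.1.2⟩,
     fun a b hab => ρ.injective (τ.2.2 hab)⟩)
  constructor
  · intro τ τ' hττ'
    apply Subtype.ext
    funext t
    have := congrFun (congrArg Subtype.val hττ') (ρ.symm t)
    simpa using this
  · intro σ
    refine ⟨⟨fun t => σ.1 (ρ.symm t),
      ⟨fun t => ?_,
       by show σ.1 (ρ.symm t₀) = x₀; rw [← ht, ρ.symm_apply_apply]; exact σ.2.1.2⟩,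
      fun a b hab => by
        have := σ.2.2 hab
        simpa using congrArg ρ this⟩, ?_⟩
    · show σ.1 (ρ.symm (Tf t)) = Fx (σ.1 (ρ.symm t))
      have hh : ρ.symm (Tf t) = Tf' (ρ.symm t) := by
        apply ρ.injective
        rw [hρ, ρ.apply_symm_apply, ρ.apply_symm_apply]
      rw [hh]
      exact σ.2.1.1 (ρ.symm t)
    · apply Subtype.ext
      funext t
      simp

end Lovasz

section LovaszMain

instance finiteHoms {X : Type*} [Finite T] [Finite X] {Tf : T → T} {Fx : X → X}
    {t₀ : T} {x₀ : X} : Finite (Homs Tf Fx t₀ x₀) := by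
  unfold Homs; infer_instance

instance finiteInjHoms {X : Type*} [Finite T] [Finite X] {Tf : T → T} {Fx : X → X}
    {t₀ : T} {x₀ : X} : Finite (InjHoms Tf Fx t₀ x₀) := by
  unfold InjHoms; infer_instance

/-- the quotient by the trivial congruence is the original graph -/
def idCQuotEquiv (Tf : T → T) : Quotient (idC Tf).1 ≃ T where
  toFun := Quotient.lift id (fun a b h => h)
  invFun := Quotient.mk (idC Tf).1
  left_inv q := by
    obtain ⟨a, rfl⟩ := Quotient.exists_rep q
    rfl
  right_inv t := rfl

lemma card_homs_eq_sum {W : Type*} [Finite T] [Finite W] {Tf : T → T} {t₀ : T}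
    [Fintype (CompatSetoid Tf)] (Fw : W → W) (w₀ : W) :
    N Tf Fw t₀ w₀ = ∑ S : CompatSetoid Tf, I (qmap Tf S) Fw (Quotient.mk S.1 t₀) w₀ := by
  have e1 : Homs Tf Fw t₀ w₀ ≃ Σ S : CompatSetoid Tf, {τ : Homs Tf Fw t₀ w₀ // kerC τ = S} :=
    (Equiv.sigmaFiberEquiv kerC).symm
  rw [N, Nat.card_congr e1, nat_card_sigma]
  exact Finset.sum_congr rfl fun S _ =>
    Nat.card_congr (kerFiberEquiv Fw w₀ S)

lemma card_id_quot {W : Type*} [Finite T] [Finite W] {Tf : T → T} {t₀ : T}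
    (Fw : W → W) (w₀ : W) :
    I (qmap Tf (idC Tf)) Fw (Quotient.mk (idC Tf).1 t₀) w₀ = I Tf Fw t₀ w₀ := by
  apply Nat.card_congr
  refine injHomsCongrSource (Tf := qmap Tf (idC Tf)) (t₀ := Quotient.mk (idC Tf).1 t₀)
    (idCQuotEquiv Tf).symm (fun t => rfl) rfl

universe u v

lemma lovasz_inj {X : Type u} {Y : Type v} [Finite X] [Finite Y]
    (Fx : X → X) (Fy : Y → Y) (x₀ : X) (y₀ : Y)
    (H : ∀ (T : Type (max u v)) (Tf : T → T) (t₀ : T), Finite T → FGConnected Tf →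
      N Tf Fx t₀ x₀ = N Tf Fy t₀ y₀) :
    ∀ (n : ℕ) (T : Type (max u v)) (Tf : T → T) (t₀ : T), Finite T → FGConnected Tf →
      Nat.card T = n → I Tf Fx t₀ x₀ = I Tf Fy t₀ y₀ := by
  intro n
  induction n using Nat.strong_induction_on with
  | _ n ih =>
    intro T Tf t₀ hfin hconn hcard
    haveI := hfin
    haveI := Fintype.ofFinite (CompatSetoid Tf)
    classical
    have hrest : ∀ S ∈ (Finset.univ : Finset (CompatSetoid Tf)).erase (idC Tf),
        I (qmap Tf S) Fx (Quotient.mk S.1 t₀) x₀ = I (qmap Tf S) Fy (Quotient.mk S.1 t₀) y₀ := by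
      intro S hS
      have hne : S ≠ idC Tf := (Finset.mem_erase.mp hS).1
      have hnontriv : ∃ a b : T, a ≠ b ∧ S.1.r a b := by
        by_contra hc
        push_neg at hc
        apply hne
        apply Subtype.ext
        apply Setoid.ext
        intro a b
        constructor
        · intro hab
          by_contra hne'
          exact hc a b hne' hab
        · rintro rfl
          exact S.1.refl a
      obtain ⟨a, b, hab, hr⟩ := hnontriv
      haveI := Fintype.ofFinite T
      have hlt : Nat.card (Quotient S.1) < n := by
        rw [← hcard, Nat.card_eq_fintype_card, Nat.card_eq_fintype_card]
        exact Fintype.card_lt_of_surjective_not_injective (Quotient.mk S.1) Quotient.mk_surjective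
          (fun hi => hab (hi (Quotient.sound hr)))
      exact ih _ hlt (Quotient S.1) (qmap Tf S) (Quotient.mk S.1 t₀) inferInstance
        (qmap_connected hconn S) rfl
    have hN := H T Tf t₀ hfin hconn
    rw [card_homs_eq_sum Fx x₀, card_homs_eq_sum Fy y₀] at hN
    rw [← Finset.sum_erase_add _ _ (Finset.mem_univ (idC Tf)),
        ← Finset.sum_erase_add _ _ (Finset.mem_univ (idC Tf))] at hN
    rw [Finset.sum_congr rfl hrest] at hN
    have h2 := Nat.add_left_cancel hN
    rw [card_id_quot Fx x₀, card_id_quot Fy y₀] at h2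
    exact h2

/-- Pointed Lovász-type theorem for functional graphs. -/
lemma lovasz {X : Type u} {Y : Type v} [Finite X] [Finite Y]
    (Fx : X → X) (Fy : Y → Y) (x₀ : X) (y₀ : Y)
    (hX : FGConnected Fx) (hY : FGConnected Fy)
    (H : ∀ (T : Type (max u v)) (Tf : T → T) (t₀ : T), Finite T → FGConnected Tf →
      N Tf Fx t₀ x₀ = N Tf Fy t₀ y₀) :
    ∃ ρ : X ≃ Y, (∀ x, ρ (Fx x) = Fy (ρ x)) ∧ ρ x₀ = y₀ := by
  have hinj := lovasz_inj Fx Fy x₀ y₀ H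
  -- injective hom X → Y
  have h1 : I (fun x : ULift.{v} X => ULift.up (Fx x.down)) Fy (ULift.up x₀) y₀ ≥ 1 := by
    have hconn : FGConnected (fun x : ULift.{v} X => ULift.up (Fx x.down)) := by
      intro x y
      have := eqvGen_map (Tf := Fx) (Fx := fun x : ULift.{v} X => ULift.up (Fx x.down))
        (τ := fun x => (ULift.up x : ULift.{v} X)) (fun t => rfl) (hX x.down y.down)
      simpa using this
    have hI := hinj (Nat.card (ULift.{v} X)) (ULift.{v} X)
      (fun x => ULift.up (Fx x.down)) (ULift.up x₀) inferInstance hconn rfl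
    have hIX : I (fun x : ULift.{v} X => ULift.up (Fx x.down)) Fx (ULift.up x₀) x₀ ≥ 1 := by
      have : Nonempty (InjHoms (fun x : ULift.{v} X => ULift.up (Fx x.down)) Fx
          (ULift.up x₀) x₀) :=
        ⟨⟨fun x => x.down, ⟨fun t => rfl, rfl⟩, fun a b hab => by
          apply ULift.ext; exact hab⟩⟩
      exact Nat.one_le_iff_ne_zero.mpr (Nat.card_ne_zero.mpr ⟨this, inferInstance⟩)
    omega
  have h2 : I (fun y : ULift.{u} Y => ULift.up (Fy y.down)) Fx (ULift.up y₀) x₀ ≥ 1 := by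
    have hconn : FGConnected (fun y : ULift.{u} Y => ULift.up (Fy y.down)) := by
      intro x y
      have := eqvGen_map (Tf := Fy) (Fx := fun y : ULift.{u} Y => ULift.up (Fy y.down))
        (τ := fun x => (ULift.up x : ULift.{u} Y)) (fun t => rfl) (hY x.down y.down)
      simpa using this
    have hI := (hinj (Nat.card (ULift.{u} Y)) (ULift.{u} Y)
      (fun y => ULift.up (Fy y.down)) (ULift.up y₀) inferInstance hconn rfl).symm
    have hIY : I (fun y : ULift.{u} Y => ULift.up (Fy y.down)) Fy (ULift.up y₀) y₀ ≥ 1 := by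
      have : Nonempty (InjHoms (fun y : ULift.{u} Y => ULift.up (Fy y.down)) Fy
          (ULift.up y₀) y₀) :=
        ⟨⟨fun y => y.down, ⟨fun t => rfl, rfl⟩, fun a b hab => by
          apply ULift.ext; exact hab⟩⟩
      exact Nat.one_le_iff_ne_zero.mpr (Nat.card_ne_zero.mpr ⟨this, inferInstance⟩)
    omega
  obtain ⟨φ⟩ := Nat.card_ne_zero.mp (by omega : I (fun x : ULift.{v} X =>
    ULift.up (Fx x.down)) Fy (ULift.up x₀) y₀ ≠ 0) |>.1
  obtain ⟨ψ⟩ := Nat.card_ne_zero.mp (by omega : I (fun y : ULift.{u} Y =>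
    ULift.up (Fy y.down)) Fx (ULift.up y₀) x₀ ≠ 0) |>.1
  have hφinj : Function.Injective (fun x => φ.1 (ULift.up x)) := by
    intro a b hab
    have := φ.2.2 hab
    exact congrArg ULift.down this
  have hψinj : Function.Injective (fun y => ψ.1 (ULift.up y)) := by
    intro a b hab
    have := ψ.2.2 hab
    exact congrArg ULift.down this
  have hcard : Nat.card X = Nat.card Y :=
    le_antisymm (Nat.card_le_card_of_injective _ hφinj) (Nat.card_le_card_of_injective _ hψinj)
  have hbij : Function.Bijective (fun x => φ.1 (ULift.up x)) :=
    (Nat.bijective_iff_injective_and_card _).mpr ⟨hφinj, hcard⟩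
  refine ⟨Equiv.ofBijective _ hbij, fun x => φ.2.1.1 (ULift.up x), φ.2.1.2⟩

end LovaszMain

section Depth

variable {γ : Type*} {h : γ → γ}

/-- distance to the periodic part -/
noncomputable def dep (h : γ → γ) (y : γ) : ℕ := sInf {n | h^[n] y ∈ periodicPts h}

lemma dep_spec [Finite γ] (y : γ) : h^[dep h y] y ∈ periodicPts h :=
  Nat.sInf_mem (exists_periodic_iterate y)

lemma dep_eq_zero_of_periodic {y : γ} (hy : y ∈ periodicPts h) : dep h y = 0 :=
  Nat.sInf_eq_zero.mpr (Or.inl hy)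

lemma dep_apply [Finite γ] {y : γ} (hy : y ∉ periodicPts h) :
    dep h y = dep h (h y) + 1 := by
  have h0 : dep h y ≠ 0 := by
    intro h0
    have := dep_spec (h := h) y
    rw [h0] at this
    exact hy this
  obtain ⟨m, hm⟩ := Nat.exists_eq_succ_of_ne_zero h0
  have h1 : dep h (h y) ≤ m := by
    apply Nat.sInf_le
    show h^[m] (h y) ∈ periodicPts h
    rw [← Function.iterate_succ_apply]
    rw [← hm]
    exact dep_spec y
  have h2 : dep h y ≤ dep h (h y) + 1 := by
    apply Nat.sInf_le
    show h^[dep h (h y) + 1] y ∈ periodicPts h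
    rw [Function.iterate_succ_apply]
    exact dep_spec (h y)
  omega

/-- the index along the cycle of the entry point -/
noncomputable def kdx (h : γ → γ) (w : γ) (y : γ) : ℕ :=
  sInf {k | h^[k] w = h^[dep h y] y}

lemma kdx_nonempty [Finite γ] (hcon : FGConnected h) (w : γ) (y : γ) :
    {k | h^[k] w = h^[dep h y] y}.Nonempty :=
  orbit_of_connected hcon (dep_spec y)

lemma kdx_spec [Finite γ] (hcon : FGConnected h) (w : γ) (y : γ) :
    h^[kdx h w y] w = h^[dep h y] y :=
  Nat.sInf_mem (kdx_nonempty hcon w y)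

lemma iterate_eq_iterate_iff_mod {w : γ} (hw : w ∈ periodicPts h) {a b : ℕ} :
    h^[a] w = h^[b] w ↔ a % minimalPeriod h w = b % minimalPeriod h w := by
  have hmp : 0 < minimalPeriod h w := by
    obtain ⟨n, hn, hfix⟩ := hw
    exact hfix.minimalPeriod_pos hn
  constructor
  · intro hab
    refine Function.iterate_injOn_Iio_minimalPeriod (f := h) (x := w)
      (Nat.mod_lt _ hmp) (Nat.mod_lt _ hmp) ?_
    show h^[a % _] w = h^[b % _] w
    rw [Function.iterate_mod_minimalPeriod_eq, Function.iterate_mod_minimalPeriod_eq, hab]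
  · intro hab
    rw [← Function.iterate_mod_minimalPeriod_eq (n := a),
      ← Function.iterate_mod_minimalPeriod_eq (n := b), hab]

lemma kdx_lt [Finite γ] (hcon : FGConnected h) {w : γ} (hw : w ∈ periodicPts h) (y : γ) :
    kdx h w y < minimalPeriod h w := by
  have hmp : 0 < minimalPeriod h w := by
    obtain ⟨n, hn, hfix⟩ := hw
    exact hfix.minimalPeriod_pos hn
  have hmem : kdx h w y % minimalPeriod h w ∈ {k | h^[k] w = h^[dep h y] y} := by
    show h^[_] w = _
    rw [Function.iterate_mod_minimalPeriod_eq]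
    exact kdx_spec hcon w y
  have h1 : kdx h w y ≤ kdx h w y % minimalPeriod h w := Nat.sInf_le hmem
  have h2 : kdx h w y % minimalPeriod h w ≤ kdx h w y := Nat.mod_le _ _
  have : kdx h w y % minimalPeriod h w = kdx h w y := by omega
  rw [← this]
  exact Nat.mod_lt _ hmp

lemma prod_per_iff {c : ℕ} [NeZero c] {x : ZMod c} {y : γ} :
    (x, y) ∈ periodicPts (prodMap (cyc c) h) ↔ y ∈ periodicPts h := by
  constructor
  · rintro ⟨n, hn, hfix⟩
    refine ⟨n, hn, ?_⟩
    have := congrArg Prod.snd (show (prodMap (cyc c) h)^[n] (x, y) = (x, y) from hfix)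
    rw [prodMap_iterate] at this
    exact this
  · rintro ⟨n, hn, hfix⟩
    refine ⟨n * c, by
      have := Nat.pos_of_ne_zero (NeZero.ne c)
      positivity, ?_⟩
    show (prodMap (cyc c) h)^[n * c] (x, y) = (x, y)
    rw [prodMap_iterate]
    have h1 : (cyc c)^[n * c] x = x := by
      rw [cyc_iterate]
      push_cast
      simp [ZMod.natCast_self]
    have h2 : h^[n * c] y = y := iterate_fixed_of_dvd hfix ⟨c, rfl⟩
    rw [h1, h2]

lemma eqvGen_iterate_self (F : γ → γ) (x : γ) (n : ℕ) :
    Relation.EqvGen (fun a b => F a = b) x (F^[n] x) := by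
  induction n with
  | zero => exact Relation.EqvGen.refl x
  | succ n ih =>
      rw [Function.iterate_succ_apply']
      exact ih.trans _ _ _ (Relation.EqvGen.rel _ _ rfl)

end Depth

section Assembly

variable {γ γ' : Type*} [Finite γ] [Finite γ'] {h : γ → γ} {h' : γ' → γ'}
  {c : ℕ} [NeZero c] {w : γ} {w' : γ'}

/-- the canonical lift of a point of `γ` into the product `cyc c × h` -/
noncomputable def iota (c : ℕ) [NeZero c] (h : γ → γ) (w : γ) (y : γ) : ZMod c × γ :=
  ((kdx h w y : ZMod c) - (dep h y : ZMod c), y)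

lemma iota_entry (hcon : FGConnected h) (y : γ) :
    (prodMap (cyc c) h)^[dep h y] (iota c h w y) =
      (prodMap (cyc c) h)^[kdx h w y] ((0 : ZMod c), w) := by
  rw [prodMap_iterate, prodMap_iterate]
  apply Prod.ext
  · show (cyc c)^[dep h y] _ = (cyc c)^[kdx h w y] 0
    rw [cyc_iterate, cyc_iterate]
    show (kdx h w y : ZMod c) - (dep h y : ZMod c) + (dep h y : ZMod c) = 0 + _
    ring
  · show h^[dep h y] y = h^[kdx h w y] w
    exact (kdx_spec hcon w y).symm

lemma iota_mem (hcon : FGConnected h) (y : γ) :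
    Relation.EqvGen (fun a b => prodMap (cyc c) h a = b) (iota c h w y) ((0 : ZMod c), w) := by
  refine Relation.EqvGen.trans _ _ _
    (eqvGen_iterate_self (prodMap (cyc c) h) (iota c h w y) (dep h y)) ?_
  rw [iota_entry hcon]
  exact (eqvGen_iterate_self (prodMap (cyc c) h) ((0 : ZMod c), w) (kdx h w y)).symm _ _

/-- the canonical lift as an element of the component -/
noncomputable def iotaP (hcon : FGConnected h) (w : γ) (y : γ) :
    Cls (prodMap (cyc c) h) ((0 : ZMod c), w) :=
  ⟨iota c h w y, iota_mem hcon y⟩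

/-- membership in the periodic part transfers between the component and the second factor -/
lemma clsPer_iff (hcon : FGConnected h) (x : Cls (prodMap (cyc c) h) ((0 : ZMod c), w)) :
    x ∈ periodicPts (clsMap (prodMap (cyc c) h) ((0 : ZMod c), w)) ↔
      x.1 ∈ periodicPts (prodMap (cyc c) h) := by
  constructor
  · rintro ⟨n, hn, hfix⟩
    refine ⟨n, hn, ?_⟩
    show (prodMap (cyc c) h)^[n] x.1 = x.1
    rw [← clsMap_iterate]
    exact congrArg Subtype.val hfix
  · rintro ⟨n, hn, hfix⟩
    refine ⟨n, hn, ?_⟩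
    apply Subtype.ext
    rw [clsMap_iterate]
    exact hfix

instance finiteCls {Z : Type*} [Finite Z] (F : Z → Z) (z : Z) : Finite (Cls F z) := by
  unfold Cls; infer_instance

lemma assembly_key (hcon : FGConnected h) (hcon' : FGConnected h')
    (hw : w ∈ periodicPts h) (hw' : w' ∈ periodicPts h')
    (hp : minimalPeriod h w = minimalPeriod h' w')
    (Θ : Cls (prodMap (cyc c) h) ((0 : ZMod c), w) ≃
      Cls (prodMap (cyc c) h') ((0 : ZMod c), w'))
    (hΘ : ∀ x, Θ (clsMap (prodMap (cyc c) h) ((0 : ZMod c), w) x) =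
      clsMap (prodMap (cyc c) h') ((0 : ZMod c), w') (Θ x))
    (hbase : Θ (clsBase (prodMap (cyc c) h) ((0 : ZMod c), w)) =
      clsBase (prodMap (cyc c) h') ((0 : ZMod c), w')) (y : γ) :
    iotaP hcon' w' ((Θ (iotaP hcon w y)).1.2) = Θ (iotaP hcon w y) := by
  have hΘsymm : ∀ x, Θ.symm (clsMap (prodMap (cyc c) h') ((0 : ZMod c), w') x) =
      clsMap (prodMap (cyc c) h) ((0 : ZMod c), w) (Θ.symm x) := by
    intro x
    apply Θ.injective
    rw [Θ.apply_symm_apply, hΘ, Θ.apply_symm_apply]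
  set x := iotaP (c := c) hcon w y with hxdef
  set Z := Θ x with hZdef
  set d := dep h y with hddef
  set k := kdx h w y with hkdef
  have hΘper : ∀ u, u ∈ periodicPts (clsMap (prodMap (cyc c) h) ((0 : ZMod c), w)) ↔
      Θ u ∈ periodicPts (clsMap (prodMap (cyc c) h') ((0 : ZMod c), w')) := by
    intro u
    constructor
    · exact per_image hΘ
    · intro hu
      have := per_image hΘsymm hu
      rwa [Θ.symm_apply_apply] at this
  have hZiter : ∀ n, (clsMap (prodMap (cyc c) h') ((0 : ZMod c), w'))^[n] Z =
      Θ ((clsMap (prodMap (cyc c) h) ((0 : ZMod c), w))^[n] x) :=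
    fun n => (hom_iterate hΘ n x).symm
  have hper : ∀ n, h'^[n] Z.1.2 ∈ periodicPts h' ↔ h^[n] y ∈ periodicPts h := by
    intro n
    have e1 : h'^[n] Z.1.2 ∈ periodicPts h' ↔
        ((cyc c)^[n] Z.1.1, h'^[n] Z.1.2) ∈ periodicPts (prodMap (cyc c) h') :=
      prod_per_iff.symm
    have e2 : ((cyc c)^[n] Z.1.1, h'^[n] Z.1.2) =
        ((clsMap (prodMap (cyc c) h') ((0 : ZMod c), w'))^[n] Z).1 := by
      rw [clsMap_iterate, prodMap_iterate]
    have e3 := (clsPer_iff hcon' ((clsMap (prodMap (cyc c) h') ((0 : ZMod c), w'))^[n] Z)).symm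
    have e4 : ((clsMap (prodMap (cyc c) h') ((0 : ZMod c), w'))^[n] Z ∈
        periodicPts (clsMap (prodMap (cyc c) h') ((0 : ZMod c), w'))) ↔
        ((clsMap (prodMap (cyc c) h) ((0 : ZMod c), w))^[n] x ∈
        periodicPts (clsMap (prodMap (cyc c) h) ((0 : ZMod c), w))) := by
      rw [hZiter n]
      exact (hΘper _).symm
    have e5 := clsPer_iff (c := c) (w := w) hcon
      ((clsMap (prodMap (cyc c) h) ((0 : ZMod c), w))^[n] x)
    have e6 : ((clsMap (prodMap (cyc c) h) ((0 : ZMod c), w))^[n] x).1 ∈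
        periodicPts (prodMap (cyc c) h) ↔ h^[n] y ∈ periodicPts h := by
      rw [clsMap_iterate]
      show (prodMap (cyc c) h)^[n] (iota c h w y) ∈ _ ↔ _
      rw [prodMap_iterate]
      exact prod_per_iff
    rw [e1, e2, e3, e4, e5, e6]
  have hdep : dep h' Z.1.2 = d := by
    unfold dep
    congr 1
    ext n
    exact hper n
  have hck : (clsMap (prodMap (cyc c) h) ((0 : ZMod c), w))^[d] x =
      (clsMap (prodMap (cyc c) h) ((0 : ZMod c), w))^[k]
        (clsBase (prodMap (cyc c) h) ((0 : ZMod c), w)) := by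
    apply Subtype.ext
    rw [clsMap_iterate, clsMap_iterate]
    exact iota_entry hcon y
  have hZd : (clsMap (prodMap (cyc c) h') ((0 : ZMod c), w'))^[d] Z =
      (clsMap (prodMap (cyc c) h') ((0 : ZMod c), w'))^[k]
        (clsBase (prodMap (cyc c) h') ((0 : ZMod c), w')) := by
    rw [hZiter d, hck, hom_iterate hΘ, hbase]
  have hv : (prodMap (cyc c) h')^[d] Z.1 = (prodMap (cyc c) h')^[k] ((0 : ZMod c), w') := by
    have := congrArg Subtype.val hZd
    rwa [clsMap_iterate, clsMap_iterate] at this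
  rw [prodMap_iterate, prodMap_iterate] at hv
  have h1 := congrArg Prod.fst hv
  have h2 := congrArg Prod.snd hv
  simp only at h1 h2
  rw [cyc_iterate, cyc_iterate] at h1
  have hfst : Z.1.1 = (k : ZMod c) - (d : ZMod c) := by
    have : Z.1.1 + (d : ZMod c) = (k : ZMod c) := by rw [h1]; ring
    linear_combination this
  have hkdx : kdx h' w' Z.1.2 = k := by
    have hrw : h'^[dep h' Z.1.2] Z.1.2 = h'^[k] w' := by
      rw [hdep]; exact h2
    unfold kdx
    rw [hrw]
    apply le_antisymm
    · exact Nat.sInf_le rfl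
    · have hmem := Nat.sInf_mem (⟨k, rfl⟩ : {j | h'^[j] w' = h'^[k] w'}.Nonempty)
      have hmod := (iterate_eq_iterate_iff_mod hw').mp hmem
      have hklt : k < minimalPeriod h' w' := hp ▸ kdx_lt hcon hw y
      have hkk : k % minimalPeriod h' w' = k := Nat.mod_eq_of_lt hklt
      have := Nat.mod_le (sInf {j | h'^[j] w' = h'^[k] w'}) (minimalPeriod h' w')
      omega
  apply Subtype.ext
  show iota c h' w' Z.1.2 = Z.1
  unfold iota
  rw [hkdx, hdep, ← hfst]

lemma assembly (hcon : FGConnected h) (hcon' : FGConnected h')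
    (hw : w ∈ periodicPts h) (hw' : w' ∈ periodicPts h')
    (hp : minimalPeriod h w = minimalPeriod h' w')
    (Θ : Cls (prodMap (cyc c) h) ((0 : ZMod c), w) ≃
      Cls (prodMap (cyc c) h') ((0 : ZMod c), w'))
    (hΘ : ∀ x, Θ (clsMap (prodMap (cyc c) h) ((0 : ZMod c), w) x) =
      clsMap (prodMap (cyc c) h') ((0 : ZMod c), w') (Θ x))
    (hbase : Θ (clsBase (prodMap (cyc c) h) ((0 : ZMod c), w)) =
      clsBase (prodMap (cyc c) h') ((0 : ZMod c), w')) :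
    FGIso h h' := by
  have hΘsymm : ∀ x, Θ.symm (clsMap (prodMap (cyc c) h') ((0 : ZMod c), w') x) =
      clsMap (prodMap (cyc c) h) ((0 : ZMod c), w) (Θ.symm x) := by
    intro x
    apply Θ.injective
    rw [Θ.apply_symm_apply, hΘ, Θ.apply_symm_apply]
  have hbasesymm : Θ.symm (clsBase (prodMap (cyc c) h') ((0 : ZMod c), w')) =
      clsBase (prodMap (cyc c) h) ((0 : ZMod c), w) := by
    rw [← hbase, Θ.symm_apply_apply]
  have key := assembly_key hcon hcon' hw hw' hp Θ hΘ hbase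
  have key' := assembly_key hcon' hcon hw' hw hp.symm Θ.symm hΘsymm hbasesymm
  have hleft : ∀ y, (Θ.symm (iotaP hcon' w' ((Θ (iotaP hcon w y)).1.2))).1.2 = y := by
    intro y
    rw [key y, Θ.symm_apply_apply]
    rfl
  have hright : ∀ y', (Θ (iotaP hcon w ((Θ.symm (iotaP hcon' w' y')).1.2))).1.2 = y' := by
    intro y'
    rw [key' y', Θ.apply_symm_apply]
    rfl
  refine ⟨⟨fun y => (Θ (iotaP hcon w y)).1.2, fun y' => (Θ.symm (iotaP hcon' w' y')).1.2,
    hleft, hright⟩, ?_⟩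
  intro y
  show (Θ (iotaP hcon w (h y))).1.2 = h' ((Θ (iotaP hcon w y)).1.2)
  by_cases hy : y ∈ periodicPts h
  · have hφiter : ∀ (u : γ), u ∈ periodicPts h →
        (Θ (iotaP hcon w u)).1.2 = h'^[kdx h w u] w' := by
      intro u hu
      have hiota : iotaP (c := c) hcon w u =
          (clsMap (prodMap (cyc c) h) ((0 : ZMod c), w))^[kdx h w u]
            (clsBase (prodMap (cyc c) h) ((0 : ZMod c), w)) := by
        apply Subtype.ext
        rw [clsMap_iterate]
        show iota c h w u = (prodMap (cyc c) h)^[kdx h w u] ((0 : ZMod c), w)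
        rw [prodMap_iterate]
        apply Prod.ext
        · show (kdx h w u : ZMod c) - (dep h u : ZMod c) = (cyc c)^[kdx h w u] 0
          rw [cyc_iterate, dep_eq_zero_of_periodic hu]
          push_cast
          ring
        · show u = h^[kdx h w u] w
          have hspec := kdx_spec hcon w u
          rw [dep_eq_zero_of_periodic hu] at hspec
          exact hspec.symm
      rw [hiota, hom_iterate hΘ, hbase]
      have hval := clsMap_iterate (prodMap (cyc c) h') ((0 : ZMod c), w') (kdx h w u)
        (clsBase (prodMap (cyc c) h') ((0 : ZMod c), w'))
      show ((clsMap (prodMap (cyc c) h') ((0 : ZMod c), w'))^[kdx h w u]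
        (clsBase (prodMap (cyc c) h') ((0 : ZMod c), w'))).1.2 = _
      rw [hval]
      show ((prodMap (cyc c) h')^[kdx h w u] ((0 : ZMod c), w')).2 = _
      rw [prodMap_iterate]
    have hyh : h y ∈ periodicPts h := by
      have := iterate_mem_periodicPts hy 1
      rwa [Function.iterate_one] at this
    rw [hφiter y hy, hφiter (h y) hyh]
    have hcong : h^[kdx h w (h y)] w = h^[kdx h w y + 1] w := by
      have s1 := kdx_spec hcon w (h y)
      rw [dep_eq_zero_of_periodic hyh] at s1
      have s2 := kdx_spec hcon w y
      rw [dep_eq_zero_of_periodic hy] at s2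
      show _ = h^[kdx h w y + 1] w
      rw [s1, Function.iterate_succ_apply', s2]
      rfl
    have hmod := (iterate_eq_iterate_iff_mod hw).mp hcong
    rw [hp] at hmod
    calc h'^[kdx h w (h y)] w'
        = h'^[kdx h w (h y) % minimalPeriod h' w'] w' :=
          Function.iterate_mod_minimalPeriod_eq.symm
      _ = h'^[(kdx h w y + 1) % minimalPeriod h' w'] w' := by rw [hmod]
      _ = h'^[kdx h w y + 1] w' := Function.iterate_mod_minimalPeriod_eq
      _ = h' (h'^[kdx h w y] w') := Function.iterate_succ_apply' h' _ w'
  · have hiter : iotaP (c := c) hcon w (h y) =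
        clsMap (prodMap (cyc c) h) ((0 : ZMod c), w) (iotaP hcon w y) := by
      apply Subtype.ext
      show iota c h w (h y) = prodMap (cyc c) h (iota c h w y)
      have hd : dep h y = dep h (h y) + 1 := dep_apply hy
      have hk : kdx h w (h y) = kdx h w y := by
        unfold kdx
        congr 1
        ext j
        show h^[j] w = h^[dep h (h y)] (h y) ↔ h^[j] w = h^[dep h y] y
        rw [hd, Function.iterate_succ_apply]
      apply Prod.ext
      · show (kdx h w (h y) : ZMod c) - (dep h (h y) : ZMod c) =
          (cyc c) ((kdx h w y : ZMod c) - (dep h y : ZMod c))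
        rw [hk, hd]
        show _ = ((kdx h w y : ZMod c) - ((dep h (h y) + 1 : ℕ) : ZMod c)) + 1
        push_cast
        ring
      · rfl
    rw [hiter, hΘ]
    rfl

end Assembly

end FGP

/-- Corollary: with cycle lengths `c_A = |𝒫_A|`, `c_B = |𝒫_B|` and `p ≥ 1` such that
`lcm(c_A, p) = c_B`, any family of pairwise non-isomorphic connected FGs `hᵢ`, each with
exactly `p` periodic points and each with `f × hᵢ ⊇ g`, has at most `c_A` members. -/
theorem upper_bound_solutions_lcm {α β : Type*} [Fintype α] [Fintype β] [Nonempty α] [Nonempty β]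
    (f : α → α) (g : β → β) (hf : FGConnected f) (hg : FGConnected g)
    (p : ℕ) (hp : 1 ≤ p)
    (hlcm : Nat.lcm (periodicCount f) p = periodicCount g)
    (m : ℕ) (γ : Fin m → Type*) [∀ i, Fintype (γ i)] [∀ i, Nonempty (γ i)]
    (h : ∀ i, γ i → γ i)
    (hconn : ∀ i, FGConnected (h i))
    (hper : ∀ i, periodicCount (h i) = p)
    (hcont : ∀ i, FGContains f (h i) g)
    (hnoniso : ∀ i j, i ≠ j → ¬ FGIso (h i) (h j)) :
    m ≤ periodicCount f := by
  classical
  obtain ⟨b1⟩ := ‹Nonempty β›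
  obtain ⟨k0, hper0⟩ := FGP.exists_periodic_iterate (f := g) b1
  set b₀ : β := g^[k0] b1 with hb₀def
  have hb₀ : b₀ ∈ Function.periodicPts g := hper0
  have hdata : ∀ i, ∃ e : β → α × γ i, Function.Injective e ∧
      (∀ b, e (g b) = prodMap f (h i) (e b)) ∧
      (∀ z, prodMap f (h i) z ∈ Set.range e → z ∈ Set.range e) := by
    intro i
    obtain ⟨e, hinj, hcomm, hpre⟩ := hcont i
    exact ⟨e, hinj, fun b => congrFun hcomm b, hpre⟩
  choose e einj ecomm epre using hdata
  have heper : ∀ i, e i b₀ ∈ Function.periodicPts (prodMap f (h i)) := by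
    intro i
    obtain ⟨n, hn, hfix⟩ := hb₀
    refine ⟨n, hn, ?_⟩
    show (prodMap f (h i))^[n] (e i b₀) = e i b₀
    rw [← FGP.hom_iterate (ecomm i) n b₀]
    exact congrArg (e i) hfix
  have haper : ∀ i, (e i b₀).1 ∈ Function.periodicPts f := by
    intro i
    obtain ⟨n, hn, hfix⟩ := heper i
    refine ⟨n, hn, ?_⟩
    have h2 := congrArg Prod.fst (show (prodMap f (h i))^[n] (e i b₀) = e i b₀ from hfix)
    rwa [FGP.prodMap_iterate] at h2
  have hwper : ∀ i, (e i b₀).2 ∈ Function.periodicPts (h i) := by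
    intro i
    obtain ⟨n, hn, hfix⟩ := heper i
    refine ⟨n, hn, ?_⟩
    have h2 := congrArg Prod.snd (show (prodMap f (h i))^[n] (e i b₀) = e i b₀ from hfix)
    rwa [FGP.prodMap_iterate] at h2
  set c := periodicCount f with hcdef
  have hcpos : 0 < c := FGP.periodicCount_pos hf
  haveI : NeZero c := ⟨hcpos.ne'⟩
  have hinj : Function.Injective (fun i : Fin m =>
      (⟨(e i b₀).1, haper i⟩ : {x : α // x ∈ Function.periodicPts f})) := by
    intro i j hij
    by_contra hne
    apply hnoniso i j hne
    have haij : (e i b₀).1 = (e j b₀).1 := congrArg Subtype.val hij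
    have H : ∀ (T : Type _) (Tf : T → T) (t₀ : T), Finite T → FGConnected Tf →
        FGP.N Tf (FGP.clsMap (prodMap (FGP.cyc c) (h i)) ((0 : ZMod c), (e i b₀).2)) t₀
          (FGP.clsBase (prodMap (FGP.cyc c) (h i)) ((0 : ZMod c), (e i b₀).2)) =
        FGP.N Tf (FGP.clsMap (prodMap (FGP.cyc c) (h j)) ((0 : ZMod c), (e j b₀).2)) t₀
          (FGP.clsBase (prodMap (FGP.cyc c) (h j)) ((0 : ZMod c), (e j b₀).2)) := by
      intro T Tf t₀ hT hTconn
      haveI := hT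
      have split : ∀ (k : Fin m),
          FGP.N Tf (FGP.clsMap (prodMap (FGP.cyc c) (h k)) ((0 : ZMod c), (e k b₀).2)) t₀
            (FGP.clsBase (prodMap (FGP.cyc c) (h k)) ((0 : ZMod c), (e k b₀).2)) =
          FGP.N Tf (FGP.cyc c) t₀ 0 * FGP.N Tf (h k) t₀ (e k b₀).2 := by
        intro k
        have h1 := Nat.card_congr
          ((FGP.homsClsEquiv (F := prodMap (FGP.cyc c) (h k)) (t₀ := t₀) hTconn
            ((0 : ZMod c), (e k b₀).2)).trans
           (FGP.homsProdEquiv (0 : ZMod c) (e k b₀).2))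
        rw [Nat.card_prod] at h1
        exact h1
      rw [split i, split j]
      rcases Nat.eq_zero_or_pos (FGP.N Tf (FGP.cyc c) t₀ 0) with hz | hpos
      · rw [hz, Nat.zero_mul, Nat.zero_mul]
      · have hnemp : Nonempty (FGP.Homs Tf (FGP.cyc c) t₀ (0 : ZMod c)) :=
          (Nat.card_ne_zero.mp hpos.ne').1
        obtain ⟨ψ⟩ := hnemp
        have star : ∀ (k : Fin m), FGP.N Tf g t₀ b₀ =
            FGP.N Tf f t₀ (e k b₀).1 * FGP.N Tf (h k) t₀ (e k b₀).2 := by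
          intro k
          have h1 := Nat.card_congr
            ((FGP.homsContainsEquiv (t₀ := t₀) (einj k) (ecomm k) (epre k) hTconn b₀).trans
             (FGP.homsProdEquiv (e k b₀).1 (e k b₀).2))
          rw [Nat.card_prod] at h1
          exact h1
        have upos : 0 < FGP.N Tf f t₀ (e i b₀).1 := by
          have hfc : f^[c] (e i b₀).1 = (e i b₀).1 := FGP.iterate_periodicCount hf (haper i)
          haveI := FGP.homs_nonempty_of_cyc (Tf := Tf) (t₀ := t₀) hfc ψ.1 ψ.2.1
          exact Nat.card_pos
        have hNN : FGP.N Tf (h i) t₀ (e i b₀).2 = FGP.N Tf (h j) t₀ (e j b₀).2 := by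
          have s1 := star i
          have s2 := star j
          rw [← haij] at s2
          exact Nat.eq_of_mul_eq_mul_left upos (by rw [← s1, s2])
        rw [hNN]
    obtain ⟨Θ, hΘ, hbase⟩ := FGP.lovasz _ _ _ _
      (FGP.cls_connected (prodMap (FGP.cyc c) (h i)) ((0 : ZMod c), (e i b₀).2))
      (FGP.cls_connected (prodMap (FGP.cyc c) (h j)) ((0 : ZMod c), (e j b₀).2)) H
    have hpij : Function.minimalPeriod (h i) (e i b₀).2 =
        Function.minimalPeriod (h j) (e j b₀).2 := by
      have h1 := FGP.periodicCount_eq_minimalPeriod (hconn i) (hwper i)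
      have h2 := FGP.periodicCount_eq_minimalPeriod (hconn j) (hwper j)
      rw [hper i] at h1
      rw [hper j] at h2
      rw [← h1, ← h2]
    exact FGP.assembly (hconn i) (hconn j) (hwper i) (hwper j) hpij Θ hΘ hbase
  have hle : m ≤ Nat.card {x : α // x ∈ Function.periodicPts f} := by
    have h2 := Nat.card_le_card_of_injective _ hinj
    simpa using h2
  have hcardeq : periodicCount f = Nat.card {x : α // x ∈ Function.periodicPts f} := by
    apply Nat.card_congr
    exact Equiv.subtypeEquivRight (fun x => by
      simp [Function.mem_periodicPts, Function.IsPeriodicPt, Function.IsFixedPt,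
        Nat.lt_iff_add_one_le])
  omega
end
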